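/- Let E = {0,...,n-1}^d with n ≥ 2, d ≥ 1, and let f : E → {0,1} be such that the convex hull P of M_1(f) has at most 2 vertices (and M_1(f) is nonempty) and P contains no point of M_0(f). Then for every k ≥ 2, f is a k-threshold function: there exist real coefficients a_{ij} such that M_1(f) = {x ∈ E : Σ_j a_{ij} x_j ≤ a_{i0} for i = 1,...,k}. -/

import Mathlib

open Finset in
/-- The embedding of the integer cube `{0,…,n-1}^d` into `ℝ^d`. -/
def toR {d n : ℕ} (x : Fin d → Fin n) : Fin d → ℝ := fun i => (x i : ℝ)

open Finset in
/-- `f` is a `k`-threshold function on `{0,…,n-1}^d`: its `1`-set is the solution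
set of a system of `k` linear inequalities. -/
def IsKThreshold (d n k : ℕ) (f : (Fin d → Fin n) → Bool) : Prop :=
  ∃ (a : Fin k → ℝ) (b : Fin k → Fin d → ℝ),
    ∀ x, f x = true ↔ ∀ i, ∑ j, b i j * (x j : ℝ) ≤ a i

/-- The class `T(d,n,k)` of `k`-threshold functions. -/
def TClass (d n k : ℕ) : Set ((Fin d → Fin n) → Bool) := {f | IsKThreshold d n k f}

/-- The convex hull of the `1`-set of `f` (that is, `P(f)`). -/
def hullOne (d n : ℕ) (f : (Fin d → Fin n) → Bool) : Set (Fin d → ℝ) :=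
  convexHull ℝ (toR '' {x | f x = true})

/-- `f` belongs to `T(d,n,*)`: its `1`-set equals `Conv(M₁(f)) ∩ E_n^d`. -/
def LatticeConvex {d n : ℕ} (f : (Fin d → Fin n) → Bool) : Prop :=
  ∀ x, f x = true ↔ toR x ∈ hullOne d n f

/-- The class `T(d,n,*)` of all `k`-threshold functions for all `k`. -/
def TStar (d n : ℕ) : Set ((Fin d → Fin n) → Bool) := {f | LatticeConvex f}

/-- `T` is a teaching set of `f` with respect to the class `C`. -/
def TeachingSet {α : Type*} (C : Set (α → Bool)) (f : α → Bool) (T : Set α) : Prop :=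
  ∀ g ∈ C, (∀ x ∈ T, g x = f x) → g = f

/-- `x` is an essential point of `f` with respect to the class `D`. -/
def Essential {α : Type*} (D : Set (α → Bool)) (f : α → Bool) (x : α) : Prop :=
  ∃ g ∈ D, g x ≠ f x ∧ ∀ y, y ≠ x → g y = f y

/-- The set of vertices of `P(f)` (as lattice points). -/
def VertSet (d n : ℕ) (f : (Fin d → Fin n) → Bool) : Set (Fin d → Fin n) :=
  {x | toR x ∈ Set.extremePoints ℝ (hullOne d n f)}

/-- The set `D(f) = {x ∈ M₀(f) : Conv(P(f) ∪ {x}) ∩ M₀(f) = {x}}`. -/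
def DSet (d n : ℕ) (f : (Fin d → Fin n) → Bool) : Set (Fin d → Fin n) :=
  {x | f x = false ∧
    ∀ y, toR y ∈ convexHull ℝ (toR '' {z | f z = true} ∪ {toR x}) → f y = false → y = x}


open Finset

lemma exists_generic {d : ℕ} (R : Finset (Fin d → ℝ)) (hR : ∀ r ∈ R, r ≠ 0) :
    ∃ v : Fin d → ℝ, ∀ r ∈ R, ∑ j, v j * r j ≠ 0 := by
  classical
  set P : (Fin d → ℝ) → Polynomial ℝ := fun r => ∑ j : Fin d, Polynomial.C (r j) * Polynomial.X ^ (j : ℕ) with hP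
  have hPne : ∀ r ∈ R, P r ≠ 0 := by
    intro r hr
    obtain ⟨j, hj⟩ : ∃ j, r j ≠ 0 := by
      by_contra h; push_neg at h; exact hR r hr (funext h)
    intro h0
    have hc : (P r).coeff (j : ℕ) = r j := by
      rw [hP]
      simp only [Polynomial.finset_sum_coeff, Polynomial.coeff_C_mul, Polynomial.coeff_X_pow]
      rw [Finset.sum_eq_single j]
      · simp
      · intro j' _ hj'
        simp [show (j : ℕ) ≠ (j' : ℕ) from fun h => hj' (Fin.ext h.symm)]
      · simp
    rw [h0] at hc
    simp at hc
    exact hj hc.symm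
  have hfin : (⋃ r ∈ R, {s : ℝ | (P r).IsRoot s}).Finite :=
    Set.Finite.biUnion R.finite_toSet (fun r hr => Polynomial.finite_setOf_isRoot (hPne r hr))
  obtain ⟨s, hs⟩ := (hfin.infinite_compl).nonempty
  refine ⟨fun j => s ^ (j : ℕ), fun r hr => ?_⟩
  have : ¬ (P r).IsRoot s := by
    intro h
    exact hs (Set.mem_iUnion₂.2 ⟨r, hr, h⟩)
  intro h0
  apply this
  have : (P r).eval s = ∑ j : Fin d, r j * s ^ (j : ℕ) := by
    rw [hP]; simp [Polynomial.eval_finset_sum]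
  rw [Polynomial.IsRoot, this, ← h0]
  exact Finset.sum_congr rfl (fun j _ => mul_comm _ _)


lemma mem_segment_iff' {d : ℕ} {P₁ P₂ x : Fin d → ℝ} {th : ℝ}
    (hth : th = (∑ j, (P₂ j - P₁ j) * (x j - P₁ j)) /
      (∑ j, (P₂ j - P₁ j) * (P₂ j - P₁ j))) :
    x ∈ segment ℝ P₁ P₂ ↔
      ((∀ j, x j - P₁ j - th * (P₂ j - P₁ j) = 0) ∧ 0 ≤ th ∧ th ≤ 1) := by
  classical
  set Q : ℝ := ∑ j, (P₂ j - P₁ j) * (P₂ j - P₁ j) with hQdef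
  rcases eq_or_ne Q 0 with hQ | hQ
  · have hw : ∀ j, P₂ j - P₁ j = 0 := fun j =>
      mul_self_eq_zero.1 ((Finset.sum_eq_zero_iff_of_nonneg
        (fun i _ => mul_self_nonneg (P₂ i - P₁ i))).1 (hQdef ▸ hQ) j (mem_univ j))
    have hth0 : th = 0 := by
      rw [hth, Finset.sum_eq_zero (fun j _ => by rw [hw j, zero_mul]), zero_div]
    have hP : P₂ = P₁ := funext fun j => by have := hw j; linarith
    rw [hP, segment_same]
    constructor
    · intro hx
      have hx' : x = P₁ := hx
      exact ⟨fun j => by rw [hx']; ring, by simp [hth0], by simp [hth0]⟩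
    · rintro ⟨h, -, -⟩
      have : x = P₁ := funext fun j => by
        have h1 := h j
        have h2 : x j - P₁ j - th * (P₁ j - P₁ j) = x j - P₁ j := by ring
        rw [h2] at h1; linarith
      exact this
  · have hQpos : 0 < Q :=
      lt_of_le_of_ne (Finset.sum_nonneg fun i _ => mul_self_nonneg _) (Ne.symm hQ)
    constructor
    · intro hx
      rw [segment_eq_image_lineMap] at hx
      obtain ⟨s, hs, rfl⟩ := hx
      have hcoord : ∀ j, (AffineMap.lineMap P₁ P₂ s) j - P₁ j = s * (P₂ j - P₁ j) := by
        intro j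
        rw [AffineMap.lineMap_apply_module]
        simp only [Pi.add_apply, Pi.smul_apply, smul_eq_mul]
        ring
      have hnum : (∑ j, (P₂ j - P₁ j) * ((AffineMap.lineMap P₁ P₂ s) j - P₁ j)) = s * Q := by
        rw [hQdef, Finset.mul_sum]
        exact Finset.sum_congr rfl fun j _ => by rw [hcoord j]; ring
      have hths : th = s := by
        rw [hth, hnum, mul_div_assoc, div_self hQ, mul_one]
      refine ⟨fun j => by rw [hths, hcoord j]; ring, ?_, ?_⟩
      · rw [hths]; exact hs.1
      · rw [hths]; exact hs.2
    · rintro ⟨h, h0, h1⟩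
      rw [segment_eq_image_lineMap]
      refine ⟨th, ⟨h0, h1⟩, ?_⟩
      funext j
      rw [AffineMap.lineMap_apply_module]
      simp only [Pi.add_apply, Pi.smul_apply, smul_eq_mul]
      have := h j
      nlinarith [h j]


lemma mem_segment_of_between {d : ℕ} {u v a b x : Fin d → ℝ}
    (ha : a ∈ segment ℝ u v) (hb : b ∈ segment ℝ u v) (hx : x ∈ segment ℝ u v)
    (h1 : ∑ j, (v j - u j) * a j ≤ ∑ j, (v j - u j) * x j)
    (h2 : ∑ j, (v j - u j) * x j ≤ ∑ j, (v j - u j) * b j) :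
    x ∈ segment ℝ a b := by
  classical
  set Q : ℝ := ∑ j, (v j - u j) * (v j - u j) with hQdef
  rcases eq_or_ne Q 0 with hQ | hQ
  · have hw : ∀ j, v j - u j = 0 := fun j =>
      mul_self_eq_zero.1 ((Finset.sum_eq_zero_iff_of_nonneg
        (fun i _ => mul_self_nonneg (v i - u i))).1 (hQdef ▸ hQ) j (mem_univ j))
    have hvu : v = u := funext fun j => by have := hw j; linarith
    rw [hvu, segment_same] at ha hb hx
    have ha' : a = u := ha
    have hb' : b = u := hb
    have hx' : x = u := hx
    rw [ha', hb', hx', segment_same]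
    rfl
  · have hQpos : 0 < Q :=
      lt_of_le_of_ne (Finset.sum_nonneg fun i _ => mul_self_nonneg _) (Ne.symm hQ)
    rw [segment_eq_image_lineMap] at ha hb hx
    obtain ⟨α, hα, rfl⟩ := ha
    obtain ⟨β, hβ, rfl⟩ := hb
    obtain ⟨γ, hγ, rfl⟩ := hx
    have key : ∀ s : ℝ, ∑ j, (v j - u j) * (AffineMap.lineMap u v s) j
        = (∑ j, (v j - u j) * u j) + s * Q := by
      intro s
      rw [hQdef, Finset.mul_sum, ← Finset.sum_add_distrib]
      refine Finset.sum_congr rfl fun j _ => ?_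
      rw [AffineMap.lineMap_apply_module]
      simp only [Pi.add_apply, Pi.smul_apply, smul_eq_mul]
      ring
    rw [key, key] at h1
    rw [key, key] at h2
    have hαγ : α ≤ γ := by
      have : α * Q ≤ γ * Q := by linarith
      exact le_of_mul_le_mul_right this hQpos
    have hγβ : γ ≤ β := by
      have : γ * Q ≤ β * Q := by linarith
      exact le_of_mul_le_mul_right this hQpos
    have : AffineMap.lineMap u v γ ∈ (AffineMap.lineMap u v : ℝ →ᵃ[ℝ] (Fin d → ℝ)) ''
        segment ℝ α β := by
      refine Set.mem_image_of_mem _ ?_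
      rw [segment_eq_Icc (le_trans hαγ hγβ)]
      exact ⟨hαγ, hγβ⟩
    rwa [image_segment] at this

theorem stmt4 (d n : ℕ) (hd : 1 ≤ d) (hn : 2 ≤ n) (f : (Fin d → Fin n) → Bool)
    (hne : ∃ x, f x = true)
    (u v : Fin d → ℝ)
    (hvert : Set.extremePoints ℝ (hullOne d n f) ⊆ {u, v})
    (hdisj : ∀ x, f x = false → toR x ∉ hullOne d n f) :
    ∀ k, 2 ≤ k → IsKThreshold d n k f := by
  classical
  intro k hk
  obtain ⟨x₀, hx₀⟩ := hne
  -- Step 1: the hull is inside segment u v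
  have hAfin : (toR '' {x | f x = true} : Set (Fin d → ℝ)).Finite := Set.toFinite _
  have hcomp : IsCompact (hullOne d n f) := hAfin.isCompact_convexHull ℝ
  have hsub : hullOne d n f ⊆ segment ℝ u v := by
    conv_lhs => rw [← closure_convexHull_extremePoints hcomp (convex_convexHull _ _)]
    have h1 : convexHull ℝ (Set.extremePoints ℝ (hullOne d n f)) ⊆ segment ℝ u v := by
      rw [← convexHull_pair]; exact convexHull_mono hvert
    have h2 : IsClosed (segment ℝ u v) := by
      rw [← convexHull_pair]
      exact ((Set.toFinite ({u, v} : Set (Fin d → ℝ))).isCompact_convexHull ℝ).isClosed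
    exact closure_minimal h1 h2
  -- Step 2: find lattice endpoints p, q with hull = segment (toR p) (toR q)
  have hSne : (Finset.univ.filter (fun x => f x = true)).Nonempty :=
    ⟨x₀, by simp [hx₀]⟩
  obtain ⟨p, hp, hpmin⟩ := Finset.exists_min_image (Finset.univ.filter (fun x => f x = true))
    (fun x => ∑ j, (v j - u j) * (toR x j)) hSne
  obtain ⟨q, hq, hqmax⟩ := Finset.exists_max_image (Finset.univ.filter (fun x => f x = true))
    (fun x => ∑ j, (v j - u j) * (toR x j)) hSne
  have hfp : f p = true := by simpa using hp
  have hfq : f q = true := by simpa using hq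
  have hmem : ∀ z, f z = true → toR z ∈ segment ℝ u v := fun z hz =>
    hsub (subset_convexHull _ _ ⟨z, hz, rfl⟩)
  have hAseg : toR '' {x | f x = true} ⊆ segment ℝ (toR p) (toR q) := by
    rintro _ ⟨z, hz, rfl⟩
    have hz' : f z = true := hz
    exact mem_segment_of_between (hmem p hfp) (hmem q hfq) (hmem z hz')
      (hpmin z (by simp [hz'])) (hqmax z (by simp [hz']))
  have hseg : hullOne d n f = segment ℝ (toR p) (toR q) := by
    apply le_antisymm
    · exact convexHull_min hAseg (convex_segment _ _)
    · rw [← convexHull_pair]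
      refine convexHull_mono ?_
      rintro y (rfl | rfl)
      exacts [⟨p, hfp, rfl⟩, ⟨q, hfq, rfl⟩]
  have hchar : ∀ x, f x = true ↔ toR x ∈ segment ℝ (toR p) (toR q) := by
    intro x
    constructor
    · intro hx; rw [← hseg]; exact subset_convexHull _ _ ⟨x, hx, rfl⟩
    · intro hx
      by_contra h
      have hfx : f x = false := by
        cases hfx' : f x
        · rfl
        · exact absurd hfx' h
      exact hdisj x hfx (hseg ▸ hx)
  -- Step 3: the construction
  set P₁ : Fin d → ℝ := toR p with hP₁
  set P₂ : Fin d → ℝ := toR q with hP₂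
  set Q : ℝ := ∑ j, (P₂ j - P₁ j) * (P₂ j - P₁ j) with hQdef
  set θ : (Fin d → Fin n) → ℝ :=
    fun x => (∑ j, (P₂ j - P₁ j) * (toR x j - P₁ j)) / Q with hθdef
  set rv : (Fin d → Fin n) → (Fin d → ℝ) :=
    fun x j => toR x j - P₁ j - θ x * (P₂ j - P₁ j) with hrvdef
  have hsegiff : ∀ x, toR x ∈ segment ℝ P₁ P₂ ↔
      ((∀ j, rv x j = 0) ∧ 0 ≤ θ x ∧ θ x ≤ 1) := by
    intro x
    exact mem_segment_iff' (by rw [hθdef])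
  -- orthogonality of the residual
  have hwr : ∀ x, ∑ j, (P₂ j - P₁ j) * rv x j = 0 := by
    intro x
    have hexp : ∑ j, (P₂ j - P₁ j) * rv x j
        = (∑ j, (P₂ j - P₁ j) * (toR x j - P₁ j)) - θ x * Q := by
      rw [hQdef, Finset.mul_sum, ← Finset.sum_sub_distrib]
      exact Finset.sum_congr rfl fun j _ => by rw [hrvdef]; ring
    rcases eq_or_ne Q 0 with hQ | hQ
    · have hw0 : ∀ j, P₂ j - P₁ j = 0 := fun j =>
        mul_self_eq_zero.1 ((Finset.sum_eq_zero_iff_of_nonneg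
          (fun i _ => mul_self_nonneg (P₂ i - P₁ i))).1 (hQdef ▸ hQ) j (mem_univ j))
      exact Finset.sum_eq_zero fun j _ => by rw [hw0 j, zero_mul]
    · rw [hexp, hθdef]
      rw [div_mul_cancel₀ _ hQ]
      ring
  -- generic vector
  have hRne : ∀ r ∈ (Finset.univ.filter (fun x => rv x ≠ 0)).image rv, r ≠ 0 := by
    intro r hr
    simp only [Finset.mem_image, Finset.mem_filter] at hr
    obtain ⟨x, ⟨-, hx⟩, rfl⟩ := hr
    exact hx
  obtain ⟨vg, hvg⟩ := exists_generic _ hRne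
  have hvg' : ∀ x, rv x ≠ 0 → ∑ j, vg j * rv x j ≠ 0 := fun x hx =>
    hvg _ (Finset.mem_image_of_mem _ (by simp [hx]))
  set lam : ℝ := (∑ j, vg j * (P₂ j - P₁ j)) / Q with hlam
  set c : Fin d → ℝ := fun j => vg j - lam * (P₂ j - P₁ j) with hcdef
  have hcw : ∑ j, c j * (P₂ j - P₁ j) = 0 := by
    have hexp : ∑ j, c j * (P₂ j - P₁ j)
        = (∑ j, vg j * (P₂ j - P₁ j)) - lam * Q := by
      rw [hQdef, Finset.mul_sum, ← Finset.sum_sub_distrib]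
      exact Finset.sum_congr rfl fun j _ => by rw [hcdef]; ring
    rcases eq_or_ne Q 0 with hQ | hQ
    · have hw0 : ∀ j, P₂ j - P₁ j = 0 := fun j =>
        mul_self_eq_zero.1 ((Finset.sum_eq_zero_iff_of_nonneg
          (fun i _ => mul_self_nonneg (P₂ i - P₁ i))).1 (hQdef ▸ hQ) j (mem_univ j))
      exact Finset.sum_eq_zero fun j _ => by rw [hw0 j, mul_zero]
    · rw [hexp, hlam, div_mul_cancel₀ _ hQ]
      ring
  have hcr : ∀ x, ∑ j, c j * rv x j = ∑ j, vg j * rv x j := by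
    intro x
    have hexp : ∑ j, c j * rv x j
        = (∑ j, vg j * rv x j) - lam * (∑ j, (P₂ j - P₁ j) * rv x j) := by
      rw [Finset.mul_sum, ← Finset.sum_sub_distrib]
      exact Finset.sum_congr rfl fun j _ => by rw [hcdef]; ring
    rw [hexp, hwr x, mul_zero, sub_zero]
  set g : (Fin d → Fin n) → ℝ := fun x => ∑ j, c j * (toR x j - P₁ j) with hgdef
  have hgr : ∀ x, g x = ∑ j, c j * rv x j := by
    intro x
    have hexp : g x = (∑ j, c j * rv x j) + θ x * (∑ j, c j * (P₂ j - P₁ j)) := by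
      rw [hgdef, Finset.mul_sum, ← Finset.sum_add_distrib]
      exact Finset.sum_congr rfl fun j _ => by rw [hrvdef]; ring
    rw [hexp, hcw, mul_zero, add_zero]
  -- δ, M, ε
  have hVne : (insert (1:ℝ) ((Finset.univ.filter (fun x => rv x ≠ 0)).image
      (fun x => |∑ j, vg j * rv x j|))).Nonempty := Finset.insert_nonempty _ _
  set δ : ℝ := (insert (1:ℝ) ((Finset.univ.filter (fun x => rv x ≠ 0)).image
      (fun x => |∑ j, vg j * rv x j|))).min' hVne with hδdef
  have hδpos : 0 < δ := by
    rw [hδdef, Finset.lt_min'_iff]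
    intro y hy
    rcases Finset.mem_insert.1 hy with rfl | hy
    · norm_num
    · simp only [Finset.mem_image, Finset.mem_filter] at hy
      obtain ⟨x, ⟨-, hx⟩, rfl⟩ := hy
      exact abs_pos.2 (hvg' x hx)
  have hδle : ∀ x, rv x ≠ 0 → δ ≤ |∑ j, vg j * rv x j| := fun x hx =>
    Finset.min'_le _ _ (Finset.mem_insert_of_mem (Finset.mem_image_of_mem _ (by simp [hx])))
  have hMne : (insert (0:ℝ) (Finset.univ.image (fun x => |θ x|))).Nonempty :=
    Finset.insert_nonempty _ _
  set M : ℝ := (insert (0:ℝ) (Finset.univ.image (fun x => |θ x|))).max' hMne with hMdef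
  have hM : ∀ x : Fin d → Fin n, |θ x| ≤ M := fun x => by
    rw [hMdef]
    exact Finset.le_max' _ (|θ x|)
      (Finset.mem_insert_of_mem (Finset.mem_image_of_mem (fun x => |θ x|) (mem_univ x)))
  have hM0 : 0 ≤ M := by
    rw [hMdef]
    exact Finset.le_max' _ _ (Finset.mem_insert_self _ _)
  set ε : ℝ := δ / (2 * (M + 1)) with hεdef
  have hεpos : 0 < ε := div_pos hδpos (by linarith)
  have hεM : ε * (1 + M) < δ := by
    have h1 : ε * (2 * (M + 1)) = δ := div_mul_cancel₀ _ (by linarith)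
    nlinarith
  -- main characterization
  have hmain : ∀ x, f x = true ↔ (0 ≤ g x + ε * θ x ∧ g x + ε * θ x ≤ ε) := by
    intro x
    rw [hchar x, hsegiff x]
    constructor
    · rintro ⟨hr0, h0, h1⟩
      have hg0 : g x = 0 := by
        rw [hgr]
        exact Finset.sum_eq_zero fun j _ => by rw [hr0 j, mul_zero]
      rw [hg0, zero_add]
      constructor
      · positivity
      · nlinarith
    · rintro ⟨h0, h1⟩
      have hrx : ∀ j, rv x j = 0 := by
        by_contra h
        push_neg at h
        obtain ⟨j, hj⟩ := h
        have hne0 : rv x ≠ 0 := fun hh => hj (congrFun hh j)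
        have hd2 := hδle x hne0
        have hθb := hM x
        have habs : |g x + ε * θ x| ≤ ε := abs_le.2 ⟨by linarith, h1⟩
        have h2 : |g x| ≤ |g x + ε * θ x| + ε * |θ x| := by
          have h5 := abs_add_le (g x + ε * θ x) (-(ε * θ x))
          rw [abs_neg, abs_mul, abs_of_pos hεpos] at h5
          have e : g x + ε * θ x + -(ε * θ x) = g x := by ring
          rw [e] at h5
          exact h5
        have hlt : |g x| < δ := by
          have h4 : ε * |θ x| ≤ ε * M := by nlinarith
          calc |g x| ≤ ε + ε * M := by linarith
          _ = ε * (1 + M) := by ring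
          _ < δ := hεM
        rw [hgr, hcr] at hlt
        exact absurd hd2 (not_le.2 hlt)
      have hg0 : g x = 0 := by
        rw [hgr]
        exact Finset.sum_eq_zero fun j _ => by rw [hrx j, mul_zero]
      rw [hg0, zero_add] at h0 h1
      exact ⟨hrx, nonneg_of_mul_nonneg_right h0 hεpos,
        (mul_le_iff_le_one_right hεpos).1 h1⟩
  -- assemble the linear inequalities
  set b0 : Fin d → ℝ := fun j => c j + ε / Q * (P₂ j - P₁ j) with hb0
  set C1 : ℝ := ∑ j, b0 j * P₁ j with hC1
  have hL1 : ∀ x, ∑ j, b0 j * (toR x j) = g x + ε * θ x + C1 := by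
    intro x
    have expand : ∑ j, b0 j * toR x j - C1 = ∑ j, b0 j * (toR x j - P₁ j) := by
      rw [hC1, ← Finset.sum_sub_distrib]
      exact Finset.sum_congr rfl fun j _ => by ring
    have split : ∑ j, b0 j * (toR x j - P₁ j)
        = g x + (ε / Q) * (∑ j, (P₂ j - P₁ j) * (toR x j - P₁ j)) := by
      rw [hgdef, Finset.mul_sum, ← Finset.sum_add_distrib]
      exact Finset.sum_congr rfl fun j _ => by rw [hb0]; ring
    have hθsplit : ε * θ x = (ε / Q) * (∑ j, (P₂ j - P₁ j) * (toR x j - P₁ j)) := by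
      have hx0 : θ x = (∑ j, (P₂ j - P₁ j) * (toR x j - P₁ j)) / Q := rfl
      rw [hx0, eq_comm, div_mul_eq_mul_div, mul_div_assoc]
    linarith
  refine ⟨fun i => if (i : ℕ) = 0 then ε + C1 else if (i : ℕ) = 1 then -C1 else 0,
    fun i => if (i : ℕ) = 0 then b0 else if (i : ℕ) = 1 then (fun j => -b0 j) else 0, ?_⟩
  intro x
  rw [hmain x]
  have hL1' : ∑ j, b0 j * ((x j : ℕ) : ℝ) = g x + ε * θ x + C1 := hL1 x
  have hneg : ∑ j, (fun j => -b0 j) j * ((x j : ℕ) : ℝ)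
      = -∑ j, b0 j * ((x j : ℕ) : ℝ) := by
    rw [← Finset.sum_neg_distrib]
    exact Finset.sum_congr rfl fun j _ => by ring
  constructor
  · rintro ⟨h0, h1⟩ i
    show ∑ j, (if (i : ℕ) = 0 then b0 else if (i : ℕ) = 1 then (fun j => -b0 j) else 0) j
        * ((x j : ℕ) : ℝ)
      ≤ (if (i : ℕ) = 0 then ε + C1 else if (i : ℕ) = 1 then -C1 else 0)
    by_cases hi0 : (i : ℕ) = 0
    · rw [if_pos hi0, if_pos hi0]
      linarith
    · by_cases hi1 : (i : ℕ) = 1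
      · rw [if_neg hi0, if_pos hi1, if_neg hi0, if_pos hi1, hneg]
        linarith
      · rw [if_neg hi0, if_neg hi1, if_neg hi0, if_neg hi1]
        simp
  · intro h
    have h0 : ∑ j, b0 j * ((x j : ℕ) : ℝ) ≤ ε + C1 := h ⟨0, by omega⟩
    have h1 : ∑ j, (fun j => -b0 j) j * ((x j : ℕ) : ℝ) ≤ -C1 := h ⟨1, by omega⟩
    rw [hneg] at h1
    constructor <;> linarith
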